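/- Let X = {x₁,...,x_m} be a unit-norm frame for R^n whose frame operator has largest eigenvalue λ with multiplicity k (so λ > 1 when m > n). Then there exist unit vectors y₁,...,y_m in R^{m-k} such that ⟨yᵢ,yⱼ⟩ = (1/(1-λ))⟨xᵢ,xⱼ⟩ for all i ≠ j. Consequently, if X has coherence α, then α ≥ (λ-1)·√(k/((m-k)(m-1))). -/

import Mathlib

open scoped RealInnerProductSpace
abbrev E (n : ℕ) := EuclideanSpace ℝ (Fin n)
noncomputable def cohF {n m : ℕ} (x : Fin m → E n) : ℝ :=
  sSup {r : ℝ | ∃ i j : Fin m, i ≠ j ∧ r = |⟪x i, x j⟫|}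


open Finset in
lemma welch_aux {r m : ℕ} (hr : 0 < r) (hm : 2 ≤ m) (y : Fin m → E r)
    (hunit : ∀ i, ‖y i‖ = 1) :
    ∃ i j : Fin m, i ≠ j ∧ ((m : ℝ) - r) / (r * ((m : ℝ) - 1)) ≤ ⟪y i, y j⟫ ^ 2 := by
  have hy : ∀ i j, ⟪y i, y j⟫ = ∑ a, y i a * y j a := by
    intro i j; simp [PiLp.inner_apply]; exact Finset.sum_congr rfl fun _ _ => mul_comm _ _
  have hself : ∀ i, ∑ a, y i a * y i a = 1 := by
    intro i
    rw [← hy i i, real_inner_self_eq_norm_sq, hunit i, one_pow]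
  set T : Fin r → Fin r → ℝ := fun a b => ∑ i, y i a * y i b with hT
  have htr : ∑ a, T a a = (m : ℝ) := by
    simp only [hT]
    rw [Finset.sum_comm]
    simp [hself]
  set g : Fin m → Fin m → Fin r → Fin r → ℝ :=
    fun i j a b => (y i a * y i b) * (y j a * y j b) with hg
  have hsq : ∑ i, ∑ j, ⟪y i, y j⟫ ^ 2 = ∑ a, ∑ b, T a b ^ 2 := by
    have h1 : ∀ i j : Fin m, ⟪y i, y j⟫ ^ 2 = ∑ a, ∑ b, g i j a b := by
      intro i j
      rw [hy, sq, Finset.sum_mul_sum]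
      exact Finset.sum_congr rfl fun a _ => Finset.sum_congr rfl fun b _ => by
        simp only [hg]; ring
    have h2 : ∀ a b : Fin r, T a b ^ 2 = ∑ i, ∑ j, g i j a b := by
      intro a b
      simp only [hT, hg]
      rw [sq, Finset.sum_mul_sum]
    simp only [h1, h2]
    calc ∑ i, ∑ j, ∑ a, ∑ b, g i j a b
        = ∑ i, ∑ a, ∑ j, ∑ b, g i j a b :=
          Finset.sum_congr rfl fun i _ => Finset.sum_comm
      _ = ∑ a, ∑ i, ∑ j, ∑ b, g i j a b := Finset.sum_comm
      _ = ∑ a, ∑ i, ∑ b, ∑ j, g i j a b :=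
          Finset.sum_congr rfl fun a _ => Finset.sum_congr rfl fun i _ =>
            Finset.sum_comm
      _ = ∑ a, ∑ b, ∑ i, ∑ j, g i j a b :=
          Finset.sum_congr rfl fun a _ => Finset.sum_comm
  have hcs : (m : ℝ) ^ 2 ≤ r * ∑ a, ∑ b, T a b ^ 2 := by
    have h2 : (∑ a, T a a) ^ 2 ≤ (((Finset.univ : Finset (Fin r))).card : ℝ) * ∑ a, T a a ^ 2 :=
      sq_sum_le_card_mul_sum_sq
    have h3 : ∑ a, T a a ^ 2 ≤ ∑ a, ∑ b, T a b ^ 2 := by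
      refine Finset.sum_le_sum fun a _ => ?_
      exact Finset.single_le_sum (fun b _ => sq_nonneg (T a b)) (Finset.mem_univ a)
    have hcard : (((Finset.univ : Finset (Fin r))).card : ℝ) = (r : ℝ) := by simp
    calc (m : ℝ) ^ 2 = (∑ a, T a a) ^ 2 := by rw [htr]
      _ ≤ (r : ℝ) * ∑ a, T a a ^ 2 := by rw [← hcard]; exact h2
      _ ≤ r * ∑ a, ∑ b, T a b ^ 2 := by
          apply mul_le_mul_of_nonneg_left h3 (by positivity)
  have hdiag : ∑ p ∈ (Finset.univ ×ˢ Finset.univ).filter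
      (fun p : Fin m × Fin m => ¬ p.1 ≠ p.2), ⟪y p.1, y p.2⟫ ^ 2 = (m : ℝ) := by
    have hset : (Finset.univ ×ˢ Finset.univ).filter
        (fun p : Fin m × Fin m => ¬ p.1 ≠ p.2)
        = Finset.univ.image (fun i => (i, i)) := by
      ext p; simp only [Finset.mem_filter, Finset.mem_image, Finset.mem_product,
        Finset.mem_univ, true_and, not_not]
      constructor
      · rintro h; exact ⟨p.1, by simp [Prod.ext_iff, h]⟩
      · rintro ⟨i, rfl⟩; rfl
    rw [hset, Finset.sum_image (by intro a _ b _ h; exact congrArg Prod.fst h)]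
    have h1 : ∀ i : Fin m, ⟪y i, y i⟫ ^ 2 = 1 := by
      intro i; rw [real_inner_self_eq_norm_sq, hunit]; norm_num
    rw [Finset.sum_congr rfl fun i _ => h1 i]
    simp
  have hsplit : ∑ p ∈ Finset.univ.offDiag, ⟪y p.1, y p.2⟫ ^ 2 + (m:ℝ)
      = ∑ i, ∑ j, ⟪y i, y j⟫ ^ 2 := by
    have hoff : (Finset.univ.offDiag : Finset (Fin m × Fin m))
        = (Finset.univ ×ˢ Finset.univ).filter (fun p : Fin m × Fin m => p.1 ≠ p.2) := by
      ext p; simp [Finset.mem_offDiag]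
    rw [hoff, ← Finset.sum_product', ← hdiag]
    exact Finset.sum_filter_add_sum_filter_not _ _ _
  have hcard : ((Finset.univ.offDiag : Finset (Fin m × Fin m)).card : ℝ)
      = (m : ℝ) * m - m := by
    rw [Finset.offDiag_card]
    simp only [Finset.card_univ, Fintype.card_fin]
    have h1 : m ≤ m * m := Nat.le_mul_of_pos_left m (by omega)
    push_cast [Nat.cast_sub h1]
    ring
  have hne : (Finset.univ.offDiag : Finset (Fin m × Fin m)).Nonempty := by
    have h01 : (⟨0, by omega⟩ : Fin m) ≠ (⟨1, by omega⟩ : Fin m) := by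
      intro h
      have h2 := congrArg Fin.val h
      simp at h2
    exact ⟨((⟨0, by omega⟩ : Fin m), (⟨1, by omega⟩ : Fin m)),
      Finset.mem_offDiag.2 ⟨Finset.mem_univ _, Finset.mem_univ _, h01⟩⟩
  set c : ℝ := ((m : ℝ) - r) / (r * ((m : ℝ) - 1)) with hc
  have hsumc : ∑ _p ∈ (Finset.univ.offDiag : Finset (Fin m × Fin m)), c
      ≤ ∑ p ∈ Finset.univ.offDiag, ⟪y p.1, y p.2⟫ ^ 2 := by
    rw [Finset.sum_const, nsmul_eq_mul, hcard]
    have hr' : (0:ℝ) < r := by exact_mod_cast hr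
    have hm1 : (0:ℝ) < (m:ℝ) - 1 := by
      have : (2:ℝ) ≤ m := by exact_mod_cast hm
      linarith
    have hkey : (m:ℝ)^2 / r - m ≤ ∑ p ∈ Finset.univ.offDiag, ⟪y p.1, y p.2⟫ ^ 2 := by
      have h2 : (m:ℝ)^2 ≤ r * (∑ p ∈ Finset.univ.offDiag, ⟪y p.1, y p.2⟫ ^ 2 + m) := by
        rw [hsplit]; rw [hsq]; exact hcs
      rw [sub_le_iff_le_add, div_le_iff₀ hr']
      nlinarith
    have heqc : ((m : ℝ) * m - m) * c = (m:ℝ)^2 / r - m := by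
      rw [hc]
      field_simp
    linarith [heqc ▸ hkey]
  obtain ⟨p, hp, hpc⟩ := Finset.exists_le_of_sum_le hne hsumc
  obtain ⟨-, -, hne'⟩ := Finset.mem_offDiag.1 hp
  exact ⟨p.1, p.2, hne', hpc⟩


open scoped MatrixOrder in
lemma gram_factor {m r : ℕ} (M : Matrix (Fin m) (Fin m) ℝ) (hM : M.PosSemidef)
    (hker : Module.finrank ℝ (LinearMap.ker M.mulVecLin) + r = m) :
    ∃ y : Fin m → E r, ∀ i j, ⟪y i, y j⟫ = M i j := by
  set A := CFC.sqrt M with hA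
  have hA2 : A * A = M := CFC.sqrt_mul_sqrt_self M (Matrix.nonneg_iff_posSemidef.2 hM)
  have hAh : A.IsHermitian := (Matrix.nonneg_iff_posSemidef.1 (CFC.sqrt_nonneg M)).isHermitian
  have hAsym : ∀ i j, A i j = A j i := by
    intro i j
    have h := hAh.apply i j
    simp only [star_trivial] at h
    exact h.symm
  have hAT : A.transpose = A := by
    ext i j; rw [Matrix.transpose_apply, hAsym]
  have hkerA : LinearMap.ker A.mulVecLin = LinearMap.ker M.mulVecLin := by
    ext c
    simp only [LinearMap.mem_ker, Matrix.mulVecLin_apply]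
    constructor
    · intro h
      rw [← hA2, ← Matrix.mulVec_mulVec, h, Matrix.mulVec_zero]
    · intro h
      have hd : dotProduct (A.mulVec c) (A.mulVec c) = 0 := by
        rw [Matrix.dotProduct_mulVec]
        have hv : Matrix.vecMul (A.mulVec c) A = M.mulVec c := by
          rw [← Matrix.mulVec_transpose, hAT, Matrix.mulVec_mulVec, hA2]
        rw [hv, h, zero_dotProduct]
      exact dotProduct_self_eq_zero.1 hd
  have hrange : Module.finrank ℝ (LinearMap.range A.mulVecLin) = r := by
    have h1 := LinearMap.finrank_range_add_finrank_ker A.mulVecLin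
    rw [hkerA] at h1
    have h2 : Module.finrank ℝ (Fin m → ℝ) = m := by simp
    omega
  set pe := (WithLp.linearEquiv 2 ℝ (Fin m → ℝ)).symm with hpe
  set W := Submodule.map (pe : (Fin m → ℝ) →ₗ[ℝ] EuclideanSpace ℝ (Fin m))
    (LinearMap.range A.mulVecLin) with hW
  have hWr : Module.finrank ℝ W = r := by
    rw [hW]
    rw [LinearEquiv.finrank_map_eq]
    exact hrange
  have hmem : ∀ i, pe (fun j => A j i) ∈ W := by
    intro i
    refine Submodule.mem_map_of_mem ?_
    exact ⟨Pi.single i 1, by rw [Matrix.mulVecLin_apply, Matrix.mulVec_single]; simp; rfl⟩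
  have : FiniteDimensional ℝ (↥W) := inferInstance
  set b := (stdOrthonormalBasis ℝ (↥W)).reindex (finCongr (by rw [hWr])) with hb
  refine ⟨fun i => b.repr ⟨pe (fun j => A j i), hmem i⟩, ?_⟩
  intro i j
  rw [show (b.repr : ↥W ≃ₗᵢ[ℝ] E r) = b.repr from rfl]
  rw [LinearIsometryEquiv.inner_map_map]
  rw [Submodule.coe_inner]
  have hinner : ⟪pe (fun l => A l i), pe (fun l => A l j)⟫ = ∑ l, A l i * A l j := by
    simp [PiLp.inner_apply, hpe]; exact Finset.sum_congr rfl fun _ _ => mul_comm _ _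
  rw [hinner]
  rw [← hA2, Matrix.mul_apply]
  exact Finset.sum_congr rfl fun l _ => by rw [hAsym i l]


set_option maxHeartbeats 1000000 in
theorem naimark_complement_coherence_bound {n m k : ℕ} (hn : 0 < n) (hm : n < m)
    (x : Fin m → E n) (hunit : ∀ i, ‖x i‖ = 1)
    (hspan : Submodule.span ℝ (Set.range x) = ⊤)
    (S : Module.End ℝ (E n)) (hS : ∀ v, S v = ∑ i, ⟪x i, v⟫ • x i)
    (lam : ℝ) (hk : 0 < k)
    (heig : Module.finrank ℝ (Module.End.eigenspace S lam) = k)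
    (hmax : ∀ μ : ℝ, S.HasEigenvalue μ → μ ≤ lam) :
    (∃ y : Fin m → E (m - k), (∀ i, ‖y i‖ = 1) ∧
      ∀ i j : Fin m, i ≠ j → ⟪y i, y j⟫ = (1 / (1 - lam)) * ⟪x i, x j⟫) ∧
    (lam - 1) * Real.sqrt ((k : ℝ) / (((m : ℝ) - k) * ((m : ℝ) - 1))) ≤ cohF x := by
  classical
  have hxself : ∀ i, ⟪x i, x i⟫ = (1:ℝ) := by
    intro i; rw [real_inner_self_eq_norm_sq, hunit i, one_pow]
  have hsym : (S : E n →ₗ[ℝ] E n).IsSymmetric := by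
    intro u v
    simp only [hS, sum_inner, inner_sum, real_inner_smul_left, real_inner_smul_right]
    refine Finset.sum_congr rfl fun i _ => ?_
    rw [real_inner_comm u (x i)]
    ring
  have hfr : Module.finrank ℝ (E n) = n := finrank_euclideanSpace_fin
  set b := hsym.eigenvectorBasis hfr with hb
  set μ := hsym.eigenvalues hfr with hμ
  have hμlam : ∀ j, μ j ≤ lam := fun j => hmax _ (hsym.hasEigenvalue_eigenvalues hfr j)
  have hSb : ∀ j, S (b j) = μ j • b j := fun j => hsym.apply_eigenvectorBasis hfr j
  have hbself : ∀ j, ⟪b j, b j⟫ = (1:ℝ) := by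
    intro j; rw [real_inner_self_eq_norm_sq, b.orthonormal.1 j, one_pow]
  have htrace : ∑ j, μ j = (m : ℝ) := by
    have e1 : ∀ j, μ j = ⟪b j, S (b j)⟫ := by
      intro j
      rw [hSb j, real_inner_smul_right, hbself, mul_one]
    have e2 : ∀ j, ⟪b j, S (b j)⟫ = ∑ i, ⟪x i, b j⟫ * ⟪b j, x i⟫ := by
      intro j
      rw [hS]
      simp only [inner_sum, real_inner_smul_right]
    calc ∑ j, μ j = ∑ j, ∑ i, ⟪x i, b j⟫ * ⟪b j, x i⟫ := by
          exact Finset.sum_congr rfl fun j _ => (e1 j).trans (e2 j)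
      _ = ∑ i, ∑ j, ⟪x i, b j⟫ * ⟪b j, x i⟫ := Finset.sum_comm
      _ = ∑ i : Fin m, ⟪x i, x i⟫ := by
          exact Finset.sum_congr rfl fun i _ => b.sum_inner_mul_inner (x i) (x i)
      _ = (m : ℝ) := by simp [hxself, hunit]
  have hlam1 : 1 < lam := by
    have h1 : (m:ℝ) ≤ n * lam := by
      calc (m:ℝ) = ∑ j, μ j := htrace.symm
        _ ≤ ∑ _j : Fin n, lam := Finset.sum_le_sum fun j _ => hμlam j
        _ = n * lam := by
            rw [Finset.sum_const, Finset.card_univ, Fintype.card_fin, nsmul_eq_mul]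
    have hn1 : (1:ℝ) ≤ n := by exact_mod_cast hn
    have hnm : (n:ℝ) + 1 ≤ m := by exact_mod_cast hm
    nlinarith
  have hlam0 : (0:ℝ) < lam := by linarith
  have hlamne : lam ≠ 0 := ne_of_gt hlam0
  have hlam1ne : lam - 1 ≠ 0 := sub_ne_zero.2 (ne_of_gt hlam1)
  have hray : ∀ u : E n, ⟪u, S u⟫ ≤ lam * ⟪u, u⟫ := by
    intro u
    have e1 : ⟪u, S u⟫ = ∑ j, μ j * ⟪b j, u⟫ ^ 2 := by
      rw [← b.sum_inner_mul_inner u (S u)]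
      refine Finset.sum_congr rfl fun j _ => ?_
      rw [← hsym (b j) u, hSb j, real_inner_smul_left, real_inner_comm u (b j)]
      ring
    have e2 : ⟪u, u⟫ = ∑ j, ⟪b j, u⟫ ^ 2 := by
      rw [← b.sum_inner_mul_inner u u]
      refine Finset.sum_congr rfl fun j _ => ?_
      rw [real_inner_comm u (b j)]; ring
    rw [e1, e2, Finset.mul_sum]
    exact Finset.sum_le_sum fun j _ =>
      mul_le_mul_of_nonneg_right (hμlam j) (sq_nonneg _)
  -- linear maps
  set Vm : (Fin m → ℝ) →ₗ[ℝ] E n :=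
    { toFun := fun c => ∑ i, c i • x i
      map_add' := by
        intro c d
        rw [← Finset.sum_add_distrib]
        exact Finset.sum_congr rfl fun i _ => by
          rw [← add_smul]; rfl
      map_smul' := by
        intro a c
        simp only [RingHom.id_apply]
        rw [Finset.smul_sum]
        exact Finset.sum_congr rfl fun i _ => by
          rw [smul_smul]; rfl } with hVm
  set Am : E n →ₗ[ℝ] (Fin m → ℝ) :=
    { toFun := fun u => (fun i => ⟪x i, u⟫ : Fin m → ℝ)
      map_add' := by
        intro u v; funext i; exact inner_add_right _ _ _
      map_smul' := by
        intro a u; funext i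
        simp only [RingHom.id_apply]
        exact real_inner_smul_right _ _ _ } with hAm
  have hVmc : ∀ c : Fin m → ℝ, Vm c = ∑ i, c i • x i := fun c => rfl
  have hAmu : ∀ (u : E n) (i : Fin m), Am u i = ⟪x i, u⟫ := fun u i => rfl
  set G : Matrix (Fin m) (Fin m) ℝ := Matrix.of fun i j => ⟪x i, x j⟫ with hG
  have hGa : ∀ i j, G i j = ⟪x i, x j⟫ := fun i j => rfl
  have hAV : ∀ c : Fin m → ℝ, Am (Vm c) = G.mulVec c := by
    intro c
    funext i
    rw [hAmu, hVmc]
    simp only [inner_sum, real_inner_smul_right]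
    rw [Matrix.mulVec, dotProduct]
    exact Finset.sum_congr rfl fun j _ => by rw [hGa]; ring
  have hVA : ∀ u : E n, Vm (Am u) = S u := by
    intro u
    rw [hVmc, hS]
    exact Finset.sum_congr rfl fun i _ => by rw [hAmu]
  set Mm : Matrix (Fin m) (Fin m) ℝ := lam • 1 - G with hMm
  have hMmv : ∀ c : Fin m → ℝ, Mm.mulVec c = lam • c - G.mulVec c := by
    intro c
    rw [hMm, Matrix.sub_mulVec, Matrix.smul_mulVec, Matrix.one_mulVec]
  -- kernel dimension
  have hkdim : Module.finrank ℝ (LinearMap.ker Mm.mulVecLin) = k := by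
    have hf : ∀ u : Module.End.eigenspace S lam,
        (Am ∘ₗ (Module.End.eigenspace S lam).subtype) u ∈ LinearMap.ker Mm.mulVecLin := by
      intro u
      rw [LinearMap.mem_ker]
      simp only [LinearMap.comp_apply, Submodule.subtype_apply]
      simp only [Matrix.mulVecLin_apply]
      rw [hMmv]
      have hu : S (u : E n) = lam • (u : E n) := Module.End.mem_eigenspace_iff.1 u.2
      have h3 : G.mulVec (Am (u : E n)) = lam • (Am (u : E n)) := by
        rw [← hAV, hVA, hu, map_smul]
      rw [h3, sub_self]
    have hg : ∀ c : LinearMap.ker Mm.mulVecLin,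
        ((lam⁻¹ • Vm) ∘ₗ (LinearMap.ker Mm.mulVecLin).subtype) c
          ∈ Module.End.eigenspace S lam := by
      intro c
      rw [Module.End.mem_eigenspace_iff]
      have hc : G.mulVec (c : Fin m → ℝ) = lam • (c : Fin m → ℝ) := by
        have h2 := c.2
        rw [LinearMap.mem_ker, Matrix.mulVecLin_apply, hMmv, sub_eq_zero] at h2
        exact h2.symm
      simp only [LinearMap.comp_apply, Submodule.subtype_apply, LinearMap.smul_apply]
      have h3 : S (Vm (c : Fin m → ℝ))
          = lam • Vm (c : Fin m → ℝ) := by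
        rw [← hVA (Vm (c : Fin m → ℝ)), hAV, hc, map_smul]
      rw [map_smul, h3, smul_smul, smul_smul, inv_mul_cancel₀ hlamne,
        mul_inv_cancel₀ hlamne]
    have equiv : (Module.End.eigenspace S lam) ≃ₗ[ℝ] LinearMap.ker Mm.mulVecLin :=
      LinearEquiv.ofLinear
        (LinearMap.codRestrict _ (Am ∘ₗ (Module.End.eigenspace S lam).subtype) hf)
        (LinearMap.codRestrict _ ((lam⁻¹ • Vm) ∘ₗ (LinearMap.ker Mm.mulVecLin).subtype) hg)
        (by
          apply LinearMap.ext
          intro c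
          apply Subtype.ext
          simp only [LinearMap.comp_apply, LinearMap.codRestrict_apply, LinearMap.id_apply,
            LinearMap.smul_apply, Submodule.subtype_apply]
          have hc : G.mulVec (c : Fin m → ℝ) = lam • (c : Fin m → ℝ) := by
            have h4 := c.2
            rw [LinearMap.mem_ker, Matrix.mulVecLin_apply, hMmv, sub_eq_zero] at h4
            exact h4.symm
          rw [map_smul, hAV, hc, smul_smul, inv_mul_cancel₀ hlamne, one_smul])
        (by
          apply LinearMap.ext
          intro u
          apply Subtype.ext
          simp only [LinearMap.comp_apply, LinearMap.codRestrict_apply, LinearMap.id_apply,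
            LinearMap.smul_apply, Submodule.subtype_apply]
          have hu : S (u : E n) = lam • (u : E n) := Module.End.mem_eigenspace_iff.1 u.2
          rw [hVA, hu, smul_smul, inv_mul_cancel₀ hlamne, one_smul])
    rw [← equiv.finrank_eq, heig]
  -- PSD
  have hGq : ∀ c : Fin m → ℝ,
      dotProduct c (G.mulVec c) = ⟪Vm c, Vm c⟫ := by
    intro c
    rw [hVmc]
    rw [sum_inner]
    simp only [real_inner_smul_left, inner_sum, real_inner_smul_right]
    rw [dotProduct]
    refine Finset.sum_congr rfl fun i _ => ?_
    rw [Matrix.mulVec, dotProduct, Finset.mul_sum]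
    exact Finset.sum_congr rfl fun j _ => by rw [hGa]; ring
  have hkey : ∀ c : Fin m → ℝ,
      dotProduct c (G.mulVec c) ≤ lam * dotProduct c c := by
    intro c
    set w := Vm c with hw
    have hcc : (0:ℝ) ≤ dotProduct c c :=
      Finset.sum_nonneg fun i _ => mul_self_nonneg _
    have hww : (0:ℝ) ≤ ⟪w, w⟫ := real_inner_self_nonneg
    have hwc : ⟪w, w⟫ ^ 2 ≤ dotProduct c c * ⟪w, S w⟫ := by
      have e1 : ⟪w, w⟫ = ∑ i, c i * ⟪x i, w⟫ := by
        conv_lhs => rw [hw, hVmc, sum_inner]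
        exact Finset.sum_congr rfl fun i _ => real_inner_smul_left _ _ _
      have e2 : ⟪w, S w⟫ = ∑ i, ⟪x i, w⟫ ^ 2 := by
        rw [hS]
        simp only [inner_sum, real_inner_smul_right]
        refine Finset.sum_congr rfl fun i _ => ?_
        rw [real_inner_comm w (x i)]; ring
      have e3 : dotProduct c c = ∑ i, c i ^ 2 := by
        rw [dotProduct]
        exact Finset.sum_congr rfl fun i _ => (sq (c i)) ▸ by ring
      rw [e1, e2, e3]
      exact Finset.sum_mul_sq_le_sq_mul_sq _ _ _
    have hws : ⟪w, S w⟫ ≤ lam * ⟪w, w⟫ := hray w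
    rw [hGq c]
    rcases eq_or_lt_of_le hww with h | h
    · rw [← h]; positivity
    · nlinarith
  set M' : Matrix (Fin m) (Fin m) ℝ := (lam - 1)⁻¹ • Mm with hM'
  have hM'v : ∀ c : Fin m → ℝ, M'.mulVec c = (lam - 1)⁻¹ • (lam • c - G.mulVec c) := by
    intro c
    rw [hM', Matrix.smul_mulVec, hMmv]
  have hpsd : M'.PosSemidef := by
    refine Matrix.PosSemidef.of_dotProduct_mulVec_nonneg ?_ ?_
    · ext i j
      simp only [Matrix.conjTranspose_apply, star_trivial, hM', Matrix.smul_apply, hMm,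
        Matrix.sub_apply, Matrix.one_apply, smul_eq_mul]
      rw [hGa, hGa, real_inner_comm]
      by_cases hij : i = j <;> simp [hij, eq_comm]
    · intro c
      simp only [star_trivial]
      rw [hM'v, dotProduct_smul, dotProduct_sub, dotProduct_smul,
        smul_eq_mul, smul_eq_mul]
      have h1 : (0:ℝ) ≤ lam * dotProduct c c - dotProduct c (G.mulVec c) := by
        have := hkey c
        linarith
      have h2 : (0:ℝ) ≤ (lam - 1)⁻¹ := inv_nonneg.2 (by linarith)
      exact mul_nonneg h2 h1
  have hkm : k < m := by
    have h1 : Module.finrank ℝ (Module.End.eigenspace S lam) ≤ Module.finrank ℝ (E n) :=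
      Submodule.finrank_le _
    rw [heig, hfr] at h1
    omega
  have hkerM' : Module.finrank ℝ (LinearMap.ker M'.mulVecLin) + (m - k) = m := by
    have he : LinearMap.ker M'.mulVecLin = LinearMap.ker Mm.mulVecLin := by
      ext c
      simp only [LinearMap.mem_ker, Matrix.mulVecLin_apply]
      rw [hM', Matrix.smul_mulVec]
      rw [smul_eq_zero]
      have : (lam - 1)⁻¹ ≠ 0 := inv_ne_zero hlam1ne
      tauto
    rw [he, hkdim]
    omega
  obtain ⟨y, hy⟩ := gram_factor M' hpsd hkerM'
  have hM'diag : ∀ i, M' i i = 1 := by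
    intro i
    simp only [hM', Matrix.smul_apply, hMm, Matrix.sub_apply, Matrix.one_apply_eq,
      smul_eq_mul]
    rw [hGa, hxself]
    field_simp
  have hM'off : ∀ i j, i ≠ j → M' i j = (1 / (1 - lam)) * ⟪x i, x j⟫ := by
    intro i j hij
    simp only [hM', Matrix.smul_apply, hMm, Matrix.sub_apply, Matrix.one_apply_ne hij,
      smul_eq_mul]
    rw [hGa]
    have h1lam : (1:ℝ) - lam ≠ 0 := by intro h; apply hlam1ne; linarith
    field_simp
    ring
  have hyunit : ∀ i, ‖y i‖ = 1 := by
    intro i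
    have h1 : ⟪y i, y i⟫ = (1:ℝ) := by rw [hy i i, hM'diag]
    rw [real_inner_self_eq_norm_sq] at h1
    rw [← Real.sqrt_sq (norm_nonneg (y i)), h1, Real.sqrt_one]
  have hyoff : ∀ i j : Fin m, i ≠ j → ⟪y i, y j⟫ = (1 / (1 - lam)) * ⟪x i, x j⟫ := by
    intro i j hij
    rw [hy i j, hM'off i j hij]
  refine ⟨⟨y, hyunit, hyoff⟩, ?_⟩
  -- Welch bound part
  have hrpos : 0 < m - k := by omega
  have hm2 : 2 ≤ m := by omega
  obtain ⟨i, j, hij, hle⟩ := welch_aux hrpos hm2 y hyunit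
  have hcast : ((m - k : ℕ) : ℝ) = (m : ℝ) - k := by
    rw [Nat.cast_sub (le_of_lt hkm)]
  have hconst : (k : ℝ) / (((m:ℝ) - k) * ((m:ℝ) - 1))
      = ((m:ℝ) - ((m - k : ℕ) : ℝ)) / (((m - k : ℕ) : ℝ) * ((m:ℝ) - 1)) := by
    rw [hcast]
    congr 1
    ring
  have hle' : (k : ℝ) / (((m:ℝ) - k) * ((m:ℝ) - 1)) ≤ ⟪y i, y j⟫ ^ 2 := by
    rw [hconst]
    exact hle
  have hsq : Real.sqrt ((k : ℝ) / (((m:ℝ) - k) * ((m:ℝ) - 1))) ≤ |⟪y i, y j⟫| := by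
    rw [← Real.sqrt_sq_eq_abs]
    exact Real.sqrt_le_sqrt hle'
  have hxy : ⟪x i, x j⟫ = (1 - lam) * ⟪y i, y j⟫ := by
    rw [hyoff i j hij]
    have h1lam : (1:ℝ) - lam ≠ 0 := by intro h; apply hlam1ne; linarith
    field_simp
  have habs : (lam - 1) * |⟪y i, y j⟫| = |⟪x i, x j⟫| := by
    rw [hxy, abs_mul, abs_of_neg (show (1:ℝ) - lam < 0 by linarith)]
    ring
  have hbdd : BddAbove {r : ℝ | ∃ i j : Fin m, i ≠ j ∧ r = |⟪x i, x j⟫|} := by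
    refine ⟨1, ?_⟩
    rintro r ⟨i', j', hij', rfl⟩
    calc |⟪x i', x j'⟫| ≤ ‖x i'‖ * ‖x j'‖ := abs_real_inner_le_norm _ _
      _ = 1 := by rw [hunit, hunit, mul_one]
  have hmem : |⟪x i, x j⟫| ∈ {r : ℝ | ∃ i j : Fin m, i ≠ j ∧ r = |⟪x i, x j⟫|} :=
    ⟨i, j, hij, rfl⟩
  have hcoh : |⟪x i, x j⟫| ≤ cohF x := le_csSup hbdd hmem
  have hstep : (lam - 1) * Real.sqrt ((k : ℝ) / (((m:ℝ) - k) * ((m:ℝ) - 1)))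
      ≤ (lam - 1) * |⟪y i, y j⟫| :=
    mul_le_mul_of_nonneg_left hsq (by linarith)
  linarith [habs ▸ hstep]
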